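/- (Proposition 3.) Suppose λ_i = λ ∈ (0,1) for all i and W is doubly stochastic. Let x̄ = (1/N)·Σ_i x̃_i and x̄* = (1/N)·Σ_i x*_i be the average entries of the AI-mediated equilibrium x̃ and the standard Friedkin–Johnsen equilibrium x*, respectively. Then x̄ − x̄* = [(1−λ)/(λ + (1−λ)(1−m))] · B_one-off(f_lin, x(0)), and the scaling factor (1−λ)/(λ + (1−λ)(1−m)) exceeds 1 if and only if m·(1−λ) > λ. -/

import Mathlib

open Matrix BigOperators


lemma aux_det {N : ℕ} (A : Matrix (Fin N) (Fin N) ℝ) (h0 : ∀ i j, 0 ≤ A i j)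
    (h1 : ∀ i, ∑ j, A i j < 1) : IsUnit (1 - A).det := by
  rw [isUnit_iff_ne_zero]
  intro hdet
  obtain ⟨v, hv0, hv⟩ := (Matrix.exists_mulVec_eq_zero_iff).2 hdet
  rw [Matrix.sub_mulVec, Matrix.one_mulVec, sub_eq_zero] at hv
  have hAv : ∀ i, v i = ∑ j, A i j * v j := by
    intro i
    simpa [Matrix.mulVec, dotProduct] using congrFun hv i
  obtain ⟨i0, hi0⟩ := Function.ne_iff.1 hv0
  obtain ⟨i, -, hi⟩ := Finset.exists_max_image (Finset.univ : Finset (Fin N))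
    (fun j => |v j|) ⟨i0, Finset.mem_univ i0⟩
  have hpos : 0 < |v i| := lt_of_lt_of_le (abs_pos.2 hi0) (hi i0 (Finset.mem_univ i0))
  have hle : |v i| ≤ (∑ j, A i j) * |v i| := by
    calc |v i| = |∑ j, A i j * v j| := by rw [← hAv i]
    _ ≤ ∑ j, |A i j * v j| := Finset.abs_sum_le_sum_abs _ _
    _ = ∑ j, A i j * |v j| := by
        refine Finset.sum_congr rfl fun j _ => ?_
        rw [abs_mul, abs_of_nonneg (h0 i j)]
    _ ≤ ∑ j, A i j * |v i| := by
        refine Finset.sum_le_sum fun j _ => ?_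
        exact mul_le_mul_of_nonneg_left (hi j (Finset.mem_univ j)) (h0 i j)
    _ = (∑ j, A i j) * |v i| := by rw [Finset.sum_mul]
  have : (∑ j, A i j) * |v i| < 1 * |v i| := by
    exact mul_lt_mul_of_pos_right (h1 i) hpos
  linarith

lemma aux_sum {N : ℕ} (M : Matrix (Fin N) (Fin N) ℝ) (c : ℝ) (hc : c ≠ 0)
    (hdet : IsUnit M.det) (hcol : ∀ j, ∑ i, M i j = c) (v : Fin N → ℝ) :
    ∑ i, (M⁻¹ *ᵥ v) i = (1 / c) * ∑ i, v i := by
  have h1 : (fun _ => (1:ℝ)) ᵥ* M = c • (fun _ => (1:ℝ)) := by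
    funext j
    simp [Matrix.vecMul, dotProduct, hcol j]
  have h2 : (fun _ => (1:ℝ)) ᵥ* M⁻¹ = (1 / c) • (fun _ => (1:ℝ)) := by
    have h := congrArg (fun u => u ᵥ* M⁻¹) h1
    simp only [Matrix.smul_vecMul, Matrix.vecMul_vecMul,
      Matrix.mul_nonsing_inv M hdet, Matrix.vecMul_one] at h
    calc (fun _ => (1:ℝ)) ᵥ* M⁻¹
        = (1 / c) • (c • ((fun _ => (1:ℝ)) ᵥ* M⁻¹)) := by
          rw [smul_smul]; field_simp; rw [one_smul]
      _ = (1 / c) • (fun _ => (1:ℝ)) := by rw [← h]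
  calc ∑ i, (M⁻¹ *ᵥ v) i = (fun _ => (1:ℝ)) ⬝ᵥ (M⁻¹ *ᵥ v) := by
        simp [dotProduct]
    _ = ((fun _ => (1:ℝ)) ᵥ* M⁻¹) ⬝ᵥ v := by rw [Matrix.dotProduct_mulVec]
    _ = (1 / c) * ∑ i, v i := by
        rw [h2]; simp [dotProduct, Finset.mul_sum]

/-- Proposition 3: With uniform stubbornness `λ` and `W` doubly
stochastic, the averages `x̄` and `x̄*` of the AI-mediated equilibrium
`x̃ = (I − mC)⁻¹·[Λ x(0) + (1−m) ν (I−Λ) 𝟏]` (with `Λ = λI`, `C = (1−λ)W`) and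
the Friedkin–Johnsen equilibrium `x* = (I − C)⁻¹ Λ x(0)` satisfy
`x̄ − x̄* = [(1−λ)/(λ + (1−λ)(1−m))]·B_one-off(f_lin, x(0))`, and the scaling
factor exceeds 1 iff `m(1−λ) > λ`. -/
theorem stmt13 (N : ℕ) (hN : 1 ≤ N)
    (W : Matrix (Fin N) (Fin N) ℝ)
    (hWpos : ∀ i j, 0 ≤ W i j)
    (hWrow : ∀ i, ∑ j, W i j = 1)
    (hWcol : ∀ j, ∑ i, W i j = 1)
    (lam : ℝ) (hlam : lam ∈ Set.Ioo (0 : ℝ) 1)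
    (m : ℝ) (hm : m ∈ Set.Ioo (0 : ℝ) 1) (ν : ℝ) (hν : ν ∈ Set.Icc (0 : ℝ) 1)
    (C : Matrix (Fin N) (Fin N) ℝ) (hC : C = (1 - lam) • W)
    (x0 : Fin N → ℝ)
    (xt : Fin N → ℝ)
    (hxt : xt = (1 - m • C)⁻¹ *ᵥ
      (lam • x0 + ((1 - m) * ν * (1 - lam)) • (1 : Fin N → ℝ)))
    (xs : Fin N → ℝ) (hxs : xs = (1 - C)⁻¹ *ᵥ (lam • x0))
    (flin : ℝ → ℝ) (hf : ∀ x, flin x = m * x + (1 - m) * ν)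
    (B : ℝ) (hB : B = (1 / (N : ℝ)) * ∑ i, (flin (x0 i) - x0 i))
    (xbar : ℝ) (hxbar : xbar = (1 / (N : ℝ)) * ∑ i, xt i)
    (xbars : ℝ) (hxbars : xbars = (1 / (N : ℝ)) * ∑ i, xs i) :
    xbar - xbars = ((1 - lam) / (lam + (1 - lam) * (1 - m))) * B ∧
    (1 < (1 - lam) / (lam + (1 - lam) * (1 - m)) ↔ lam < m * (1 - lam)) := by
  obtain ⟨hl0, hl1⟩ := hlam
  obtain ⟨hm0, hm1⟩ := hm
  have hNpos : (0:ℝ) < N := by exact_mod_cast Nat.lt_of_lt_of_le Nat.zero_lt_one hN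
  have hNne : (N:ℝ) ≠ 0 := ne_of_gt hNpos
  have hc1pos : 0 < 1 - m * (1 - lam) := by nlinarith
  have hc1ne : (1:ℝ) - m * (1 - lam) ≠ 0 := ne_of_gt hc1pos
  have hdenpos : 0 < lam + (1 - lam) * (1 - m) := by nlinarith
  -- column sums of C
  have hCcol : ∀ j, ∑ i, C i j = 1 - lam := by
    intro j
    simp only [hC, Matrix.smul_apply, smul_eq_mul, ← Finset.mul_sum, hWcol j, mul_one]
  -- determinant facts
  have hdet1 : IsUnit (1 - m • C).det := by
    apply aux_det
    · intro i j
      simp only [hC, Matrix.smul_apply, smul_eq_mul]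
      exact mul_nonneg (le_of_lt hm0) (mul_nonneg (by linarith) (hWpos i j))
    · intro i
      have : ∑ j, (m • C) i j = m * (1 - lam) := by
        simp only [Matrix.smul_apply, smul_eq_mul, ← Finset.mul_sum, hC, hWrow i, mul_one]
      rw [this]; linarith
  have hdet2 : IsUnit (1 - C).det := by
    apply aux_det
    · intro i j
      simp only [hC, Matrix.smul_apply, smul_eq_mul]
      nlinarith [hWpos i j]
    · intro i
      have : ∑ j, C i j = 1 - lam := by
        simp only [hC, Matrix.smul_apply, smul_eq_mul, ← Finset.mul_sum, hWrow i, mul_one]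
      rw [this]; linarith
  -- column sums of the two "I - ..." matrices
  have hcol1 : ∀ j, ∑ i, (1 - m • C) i j = 1 - m * (1 - lam) := by
    intro j
    have h1 : ∑ i, (1 : Matrix (Fin N) (Fin N) ℝ) i j = 1 := by
      simp [Matrix.one_apply]
    calc ∑ i, (1 - m • C) i j
        = ∑ i, ((1 : Matrix (Fin N) (Fin N) ℝ) i j - m * C i j) := by
          simp [Matrix.sub_apply, Matrix.smul_apply, smul_eq_mul]
      _ = (∑ i, (1 : Matrix (Fin N) (Fin N) ℝ) i j) - m * ∑ i, C i j := by
          rw [Finset.sum_sub_distrib, Finset.mul_sum]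
      _ = 1 - m * (1 - lam) := by rw [h1, hCcol j]
  have hcol2 : ∀ j, ∑ i, (1 - C) i j = lam := by
    intro j
    have h1 : ∑ i, (1 : Matrix (Fin N) (Fin N) ℝ) i j = 1 := by
      simp [Matrix.one_apply]
    calc ∑ i, (1 - C) i j
        = ∑ i, ((1 : Matrix (Fin N) (Fin N) ℝ) i j - C i j) := by
          simp [Matrix.sub_apply]
      _ = (∑ i, (1 : Matrix (Fin N) (Fin N) ℝ) i j) - ∑ i, C i j := by
          rw [Finset.sum_sub_distrib]
      _ = lam := by rw [h1, hCcol j]; ring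
  -- sums of equilibria
  have hsumxt : ∑ i, xt i = (1 / (1 - m * (1 - lam))) *
      (lam * ∑ i, x0 i + (1 - m) * ν * (1 - lam) * N) := by
    rw [hxt, aux_sum _ _ hc1ne hdet1 hcol1]
    congr 1
    simp [Finset.sum_add_distrib, ← Finset.mul_sum, Finset.card_univ, mul_comm]
  have hsumxs : ∑ i, xs i = ∑ i, x0 i := by
    rw [hxs, aux_sum _ lam (ne_of_gt hl0) hdet2 hcol2]
    have : ∑ i, (lam • x0) i = lam * ∑ i, x0 i := by
      simp [← Finset.mul_sum]
    rw [this]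
    field_simp
  have hBval : B = (1 / (N : ℝ)) * ((m - 1) * ∑ i, x0 i + N * ((1 - m) * ν)) := by
    rw [hB]
    congr 1
    simp only [hf]
    rw [Finset.sum_sub_distrib] -- maybe not needed
    rw [Finset.sum_add_distrib, ← Finset.mul_sum, Finset.sum_const, Finset.card_univ,
      Fintype.card_fin]
    push_cast
    ring
  constructor
  · rw [hxbar, hxbars, hsumxt, hsumxs, hBval]
    have hdenne : lam + (1 - lam) * (1 - m) ≠ 0 := ne_of_gt hdenpos
    field_simp
    ring
  · rw [one_lt_div hdenpos]
    constructor <;> intro h <;> nlinarith
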